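/- Let ω ∈ ℂ with |ω| = 1. Then 1−2ω+2ω² ≠ 0, and |ω(1−2ω+ω²) − i·ω(1−ω+ω²)| = |1−2ω+2ω²| = |ω(1−2ω+ω²) + i·ω(1−ω+ω²)|. Consequently both complex numbers ω[(1−2ω+ω²) ∓ i(1−ω+ω²)]/(1−2ω+2ω²) have modulus 1. -/

import Mathlib

theorem wojcik_lambda_sq_unit_modulus
    (ω : ℂ) (hω : ‖ω‖ = 1) :
    1 - 2 * ω + 2 * ω ^ 2 ≠ 0 ∧
    ‖(ω * (1 - 2 * ω + ω ^ 2) - Complex.I * ω * (1 - ω + ω ^ 2))‖ =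
      ‖(1 - 2 * ω + 2 * ω ^ 2)‖ ∧
    ‖(ω * (1 - 2 * ω + ω ^ 2) + Complex.I * ω * (1 - ω + ω ^ 2))‖ =
      ‖(1 - 2 * ω + 2 * ω ^ 2)‖ ∧
    ‖
      (ω * ((1 - 2 * ω + ω ^ 2) - Complex.I * (1 - ω + ω ^ 2)) / (1 - 2 * ω + 2 * ω ^ 2))‖ = 1 ∧
    ‖
      (ω * ((1 - 2 * ω + ω ^ 2) + Complex.I * (1 - ω + ω ^ 2)) / (1 - 2 * ω + 2 * ω ^ 2))‖ = 1 := by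
  have hω0 : ω ≠ 0 := by
    intro h; rw [h] at hω; simp at hω
  have hn : ω.re ^ 2 + ω.im ^ 2 = 1 := by
    have h := Complex.sq_norm ω
    rw [hω] at h
    simpa [Complex.normSq_apply, sq] using h.symm
  have hD : 1 - 2 * ω + 2 * ω ^ 2 ≠ 0 := by
    intro h
    rw [Complex.ext_iff] at h
    simp [Complex.add_re, Complex.add_im, Complex.sub_re, Complex.sub_im, pow_two,
      Complex.mul_re, Complex.mul_im] at h
    obtain ⟨h1, h2⟩ := h
    nlinarith [sq_nonneg ω.im, sq_nonneg (2 * ω.re - 1), sq_nonneg ω.re, h2, sq_nonneg (ω.im * (2*ω.re - 1))]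
  have hc : (starRingEnd ℂ) ω = ω⁻¹ := (Complex.inv_eq_conj hω).symm
  have habs : ∀ z w : ℂ, z * (starRingEnd ℂ) z = w * (starRingEnd ℂ) w →
      ‖z‖ = ‖w‖ := by
    intro z w h
    rw [Complex.mul_conj, Complex.mul_conj] at h
    have : Complex.normSq z = Complex.normSq w := by exact_mod_cast h
    rw [Complex.norm_def, Complex.norm_def, this]
  have key1 : ‖ω * (1 - 2 * ω + ω ^ 2) - Complex.I * ω * (1 - ω + ω ^ 2)‖ =
      ‖1 - 2 * ω + 2 * ω ^ 2‖ := by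
    apply habs
    simp only [map_sub, map_add, map_mul, map_one, map_pow, map_ofNat, Complex.conj_I, hc]
    field_simp
    ring_nf
    simp only [Complex.I_sq]
    ring
  have key2 : ‖ω * (1 - 2 * ω + ω ^ 2) + Complex.I * ω * (1 - ω + ω ^ 2)‖ =
      ‖1 - 2 * ω + 2 * ω ^ 2‖ := by
    apply habs
    simp only [map_sub, map_add, map_mul, map_one, map_pow, map_ofNat, Complex.conj_I, hc]
    field_simp
    ring_nf
    simp only [Complex.I_sq]
    ring
  have hDabs : ‖1 - 2 * ω + 2 * ω ^ 2‖ ≠ 0 := by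
    simpa using hD
  refine ⟨hD, key1, key2, ?_, ?_⟩
  · rw [norm_div]
    rw [show ω * ((1 - 2 * ω + ω ^ 2) - Complex.I * (1 - ω + ω ^ 2)) =
      ω * (1 - 2 * ω + ω ^ 2) - Complex.I * ω * (1 - ω + ω ^ 2) by ring, key1]
    field_simp
  · rw [norm_div]
    rw [show ω * ((1 - 2 * ω + ω ^ 2) + Complex.I * (1 - ω + ω ^ 2)) =
      ω * (1 - 2 * ω + ω ^ 2) + Complex.I * ω * (1 - ω + ω ^ 2) by ring, key2]
    field_simp
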